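/- arXiv:2010.15353 — 6 statements merged into one kernel-verified Lean document; each statement's English description precedes it below -/
import Mathlib

section
/- Let X, V, Q be real inner product spaces, A : X →L[ℝ] X a continuous linear operator that is symmetric (⟪A σ, τ⟫ = ⟪σ, A τ⟫ for all σ, τ ∈ X) and positive semidefinite (0 ≤ ⟪A τ, τ⟫ for all τ ∈ X), and Dₑ : X →ₗ[ℝ] V, S : X →ₗ[ℝ] Q linear maps. Suppose x ∈ X, u ∈ V, γ ∈ Q and y ∈ X satisfy: (i) ⟪A x, τ⟫ + ⟪u, Dₑ τ⟫ + ⟪γ, S τ⟫ = −⟪A y, τ⟫ for all τ ∈ X; (ii) Dₑ x = 0; (iii) S x = 0. Then ⟪A x, x⟫ ≤ ⟪A y, y⟫. -/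
open scoped RealInnerProductSpace

/-- Abstract mixed elasticity step: if `A` is symmetric positive semidefinite,
`⟪A x, τ⟫ + ⟪u, Dₑ τ⟫ + ⟪γ, S τ⟫ = -⟪A y, τ⟫` for all `τ`, `Dₑ x = 0` and `S x = 0`,
then `⟪A x, x⟫ ≤ ⟪A y, y⟫`. -/
theorem stmt_1 {X V Q : Type*}
    [NormedAddCommGroup X] [InnerProductSpace ℝ X]
    [NormedAddCommGroup V] [InnerProductSpace ℝ V]
    [NormedAddCommGroup Q] [InnerProductSpace ℝ Q]
    (A : X →L[ℝ] X)
    (hsym : ∀ σ τ : X, ⟪A σ, τ⟫ = ⟪σ, A τ⟫)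
    (hpos : ∀ τ : X, 0 ≤ ⟪A τ, τ⟫)
    (De : X →ₗ[ℝ] V) (S : X →ₗ[ℝ] Q)
    (x : X) (u : V) (γ : Q) (y : X)
    (h1 : ∀ τ : X, ⟪A x, τ⟫ + ⟪u, De τ⟫ + ⟪γ, S τ⟫ = -⟪A y, τ⟫)
    (h2 : De x = 0)
    (h3 : S x = 0) :
    ⟪A x, x⟫ ≤ ⟪A y, y⟫ := by
  have hx := h1 x
  rw [h2, h3, inner_zero_right, inner_zero_right, add_zero, add_zero] at hx
  have hpxy := hpos (x + y)
  have hxy : ⟪A x, y⟫ = ⟪A y, x⟫ := by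
    rw [hsym x y, real_inner_comm]
  simp only [map_add, inner_add_left, inner_add_right] at hpxy
  linarith
end

section
/- Let X, V, Q, W be real inner product spaces, A : X →L[ℝ] X a continuous linear operator that is symmetric (⟪A σ, τ⟫ = ⟪σ, A τ⟫) and satisfies 0 ≤ ⟪A τ, τ⟫ ≤ a_max ‖τ‖² for all τ ∈ X with a constant a_max > 0, ι : W →ₗ[ℝ] X a linear map with ‖ι w‖ ≤ c_ι ‖w‖ for all w ∈ W (c_ι > 0), and Dₑ : X →ₗ[ℝ] V, S : X →ₗ[ℝ] Q linear maps satisfying the elasticity inf-sup condition with constant β_e > 0: for every v ∈ V and ξ ∈ Q there exists τ ∈ X with (‖τ‖² + ‖Dₑ τ‖²)^{1/2} ≤ 1 and β_e (‖v‖ + ‖ξ‖) ≤ ⟪v, Dₑ τ⟫ + ⟪ξ, S τ⟫. Let α ∈ ℝ. If σ ∈ X, u ∈ V, γ ∈ Q, p ∈ W satisfy ⟪A σ, τ⟫ + ⟪u, Dₑ τ⟫ + ⟪γ, S τ⟫ = −α ⟪A (ι p), τ⟫ for all τ ∈ X, then β_e (‖u‖ + ‖γ‖) ≤ a_max^{1/2}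 ⟪A σ, σ⟫^{1/2} + |α| a_max c_ι ‖p‖. -/
open scoped RealInnerProductSpace

lemma semi_cs {X : Type*} [NormedAddCommGroup X] [InnerProductSpace ℝ X]
    (A : X →L[ℝ] X)
    (hsym : ∀ σ τ : X, ⟪A σ, τ⟫ = ⟪σ, A τ⟫)
    (hpos : ∀ τ : X, 0 ≤ ⟪A τ, τ⟫) (x y : X) :
    |⟪A x, y⟫| ≤ Real.sqrt ⟪A x, x⟫ * Real.sqrt ⟪A y, y⟫ := by
  have hsymm : ∀ a b : X, ⟪A a, b⟫ = ⟪A b, a⟫ := by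
    intro a b
    rw [hsym, real_inner_comm]
  have hq : ∀ t : ℝ, 0 ≤ ⟪A y, y⟫ * (t * t) + (2 * ⟪A x, y⟫) * t + ⟪A x, x⟫ := by
    intro t
    have := hpos (x + t • y)
    have hexp : ⟪A (x + t • y), x + t • y⟫
        = ⟪A y, y⟫ * (t * t) + (2 * ⟪A x, y⟫) * t + ⟪A x, x⟫ := by
      simp only [map_add, map_smul, inner_add_left, inner_add_right,
        real_inner_smul_left, real_inner_smul_right]
      rw [hsymm y x]
      ring
    linarith [hexp ▸ this]
  have hd := discrim_le_zero hq
  unfold discrim at hd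
  have hsq : ⟪A x, y⟫ ^ 2 ≤ ⟪A x, x⟫ * ⟪A y, y⟫ := by nlinarith
  calc |⟪A x, y⟫| = Real.sqrt (⟪A x, y⟫ ^ 2) := by
        rw [Real.sqrt_sq_eq_abs]
    _ ≤ Real.sqrt (⟪A x, x⟫ * ⟪A y, y⟫) := Real.sqrt_le_sqrt hsq
    _ = Real.sqrt ⟪A x, x⟫ * Real.sqrt ⟪A y, y⟫ := Real.sqrt_mul (hpos x) _

/-- Abstract displacement–rotation stability bound from the elasticity inf-sup condition. -/
theorem stmt_2 {X V Q W : Type*}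
    [NormedAddCommGroup X] [InnerProductSpace ℝ X]
    [NormedAddCommGroup V] [InnerProductSpace ℝ V]
    [NormedAddCommGroup Q] [InnerProductSpace ℝ Q]
    [NormedAddCommGroup W] [InnerProductSpace ℝ W]
    (A : X →L[ℝ] X) (a_max : ℝ) (ha_max : 0 < a_max)
    (hsym : ∀ σ τ : X, ⟪A σ, τ⟫ = ⟪σ, A τ⟫)
    (hpos : ∀ τ : X, 0 ≤ ⟪A τ, τ⟫)
    (hbound : ∀ τ : X, ⟪A τ, τ⟫ ≤ a_max * ‖τ‖ ^ 2)
    (ι : W →ₗ[ℝ] X) (c_ι : ℝ) (hc_ι : 0 < c_ι)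
    (hι : ∀ w : W, ‖ι w‖ ≤ c_ι * ‖w‖)
    (De : X →ₗ[ℝ] V) (S : X →ₗ[ℝ] Q)
    (β_e : ℝ) (hβ_e : 0 < β_e)
    (hinfsup : ∀ (v : V) (ξ : Q), ∃ τ : X,
      Real.sqrt (‖τ‖ ^ 2 + ‖De τ‖ ^ 2) ≤ 1 ∧
      β_e * (‖v‖ + ‖ξ‖) ≤ ⟪v, De τ⟫ + ⟪ξ, S τ⟫)
    (α : ℝ)
    (σ : X) (u : V) (γ : Q) (p : W)
    (h : ∀ τ : X, ⟪A σ, τ⟫ + ⟪u, De τ⟫ + ⟪γ, S τ⟫ = -(α * ⟪A (ι p), τ⟫)) :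
    β_e * (‖u‖ + ‖γ‖) ≤
      Real.sqrt a_max * Real.sqrt ⟪A σ, σ⟫ + |α| * a_max * c_ι * ‖p‖ := by
  obtain ⟨τ, hτ1, hτ2⟩ := hinfsup u γ
  -- ‖τ‖ ≤ 1
  have hτnorm : ‖τ‖ ≤ 1 := by
    have h1 : ‖τ‖ ^ 2 ≤ ‖τ‖ ^ 2 + ‖De τ‖ ^ 2 := le_add_of_nonneg_right (by positivity)
    have h2 : ‖τ‖ = Real.sqrt (‖τ‖ ^ 2) := (Real.sqrt_sq (norm_nonneg τ)).symm
    calc ‖τ‖ = Real.sqrt (‖τ‖ ^ 2) := h2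
      _ ≤ Real.sqrt (‖τ‖ ^ 2 + ‖De τ‖ ^ 2) := Real.sqrt_le_sqrt h1
      _ ≤ 1 := hτ1
  have hAττ : Real.sqrt ⟪A τ, τ⟫ ≤ Real.sqrt a_max := by
    calc Real.sqrt ⟪A τ, τ⟫ ≤ Real.sqrt (a_max * ‖τ‖ ^ 2) := Real.sqrt_le_sqrt (hbound τ)
      _ = Real.sqrt a_max * ‖τ‖ := by
          rw [Real.sqrt_mul ha_max.le, Real.sqrt_sq (norm_nonneg τ)]
      _ ≤ Real.sqrt a_max :=
          mul_le_of_le_one_right (Real.sqrt_nonneg _) hτnorm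
  -- bound ⟪A σ, τ⟫
  have h1 : |⟪A σ, τ⟫| ≤ Real.sqrt ⟪A σ, σ⟫ * Real.sqrt a_max := by
    calc |⟪A σ, τ⟫| ≤ Real.sqrt ⟪A σ, σ⟫ * Real.sqrt ⟪A τ, τ⟫ := semi_cs A hsym hpos σ τ
      _ ≤ Real.sqrt ⟪A σ, σ⟫ * Real.sqrt a_max :=
        mul_le_mul_of_nonneg_left hAττ (Real.sqrt_nonneg _)
  -- bound ⟪A (ι p), τ⟫
  have h2 : |⟪A (ι p), τ⟫| ≤ a_max * c_ι * ‖p‖ := by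
    have hA : Real.sqrt ⟪A (ι p), ι p⟫ ≤ Real.sqrt a_max * (c_ι * ‖p‖) := by
      calc Real.sqrt ⟪A (ι p), ι p⟫ ≤ Real.sqrt (a_max * ‖ι p‖ ^ 2) :=
            Real.sqrt_le_sqrt (hbound _)
        _ = Real.sqrt a_max * ‖ι p‖ := by
            rw [Real.sqrt_mul ha_max.le, Real.sqrt_sq (norm_nonneg _)]
        _ ≤ Real.sqrt a_max * (c_ι * ‖p‖) :=
            mul_le_mul_of_nonneg_left (hι p) (Real.sqrt_nonneg _)
    have hsqrt : Real.sqrt a_max * Real.sqrt a_max = a_max :=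
      Real.mul_self_sqrt ha_max.le
    calc |⟪A (ι p), τ⟫| ≤ Real.sqrt ⟪A (ι p), ι p⟫ * Real.sqrt ⟪A τ, τ⟫ :=
          semi_cs A hsym hpos _ _
      _ ≤ (Real.sqrt a_max * (c_ι * ‖p‖)) * Real.sqrt a_max := by
          apply mul_le_mul hA hAττ (Real.sqrt_nonneg _)
          positivity
      _ = Real.sqrt a_max * Real.sqrt a_max * (c_ι * ‖p‖) := by ring
      _ = a_max * c_ι * ‖p‖ := by rw [hsqrt]; ring
  have heq := h τ
  have : ⟪u, De τ⟫ + ⟪γ, S τ⟫ = -(α * ⟪A (ι p), τ⟫) - ⟪A σ, τ⟫ := by linarith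
  have habs : ⟪u, De τ⟫ + ⟪γ, S τ⟫ ≤ |α| * |⟪A (ι p), τ⟫| + |⟪A σ, τ⟫| := by
    rw [this]
    have := abs_mul α ⟪A (ι p), τ⟫
    have h3 := neg_abs_le (α * ⟪A (ι p), τ⟫)
    have h4 := neg_abs_le ⟪A σ, τ⟫
    nlinarith [abs_nonneg (α * ⟪A (ι p), τ⟫), le_abs_self (α * ⟪A (ι p), τ⟫)]
  have h5 : |α| * |⟪A (ι p), τ⟫| ≤ |α| * (a_max * c_ι * ‖p‖) :=
    mul_le_mul_of_nonneg_left h2 (abs_nonneg α)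
  calc β_e * (‖u‖ + ‖γ‖) ≤ ⟪u, De τ⟫ + ⟪γ, S τ⟫ := hτ2
    _ ≤ |α| * |⟪A (ι p), τ⟫| + |⟪A σ, τ⟫| := habs
    _ ≤ |α| * (a_max * c_ι * ‖p‖) + Real.sqrt ⟪A σ, σ⟫ * Real.sqrt a_max :=
        add_le_add h5 h1
    _ = Real.sqrt a_max * Real.sqrt ⟪A σ, σ⟫ + |α| * a_max * c_ι * ‖p‖ := by ring
end

section
/- Let Z, W, Λ be real inner product spaces, D : Z →ₗ[ℝ] W a linear map satisfying the Darcy inf-sup condition with constant β_d > 0 (for every w ∈ W there exists q ∈ Z with (‖q‖² + ‖D q‖²)^{1/2} ≤ 1 and β_d ‖w‖ ≤ ⟪D q, w⟫), tr : Z →ₗ[ℝ] Λ a linear map with ‖tr q‖ ≤ c_tr ‖q‖ for all q ∈ Z (c_tr ≥ 0), and T : Z →L[ℝ] Z a continuous linear operator with ‖T q‖ ≤ M ‖q‖ for all q ∈ Z (M ≥ 0). If z ∈ Z, p ∈ W and λ ∈ Λ satisfy ⟪T z, q⟫ − ⟪p, D q⟫ = −⟪λ, tr q⟫ for all q ∈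 Z, then β_d ‖p‖ ≤ M ‖z‖ + c_tr ‖λ‖. -/
open scoped RealInnerProductSpace

/-- Abstract pressure–velocity inequality from the Darcy inf-sup condition. -/
theorem stmt_3 {Z W Λ : Type*}
    [NormedAddCommGroup Z] [InnerProductSpace ℝ Z]
    [NormedAddCommGroup W] [InnerProductSpace ℝ W]
    [NormedAddCommGroup Λ] [InnerProductSpace ℝ Λ]
    (D : Z →ₗ[ℝ] W) (β_d : ℝ) (hβ_d : 0 < β_d)
    (hinfsup : ∀ w : W, ∃ q : Z,
      Real.sqrt (‖q‖ ^ 2 + ‖D q‖ ^ 2) ≤ 1 ∧ β_d * ‖w‖ ≤ ⟪D q, w⟫)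
    (tr : Z →ₗ[ℝ] Λ) (c_tr : ℝ) (hc_tr : 0 ≤ c_tr)
    (htr : ∀ q : Z, ‖tr q‖ ≤ c_tr * ‖q‖)
    (T : Z →L[ℝ] Z) (M : ℝ) (hM : 0 ≤ M)
    (hT : ∀ q : Z, ‖T q‖ ≤ M * ‖q‖)
    (z : Z) (p : W) (lam : Λ)
    (h : ∀ q : Z, ⟪T z, q⟫ - ⟪p, D q⟫ = -⟪lam, tr q⟫) :
    β_d * ‖p‖ ≤ M * ‖z‖ + c_tr * ‖lam‖ := by
  obtain ⟨q, hq1, hq2⟩ := hinfsup p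
  have hqn : ‖q‖ ≤ 1 := by
    nlinarith [Real.sq_sqrt (by positivity : (0:ℝ) ≤ ‖q‖ ^ 2 + ‖D q‖ ^ 2),
      Real.sqrt_nonneg (‖q‖ ^ 2 + ‖D q‖ ^ 2), norm_nonneg q, norm_nonneg (D q)]
  have hpq : ⟪p, D q⟫ = ⟪T z, q⟫ + ⟪lam, tr q⟫ := by
    have := h q; linarith
  have h1 : ⟪T z, q⟫ ≤ M * ‖z‖ := by
    calc ⟪T z, q⟫ ≤ ‖T z‖ * ‖q‖ := real_inner_le_norm _ _
      _ ≤ (M * ‖z‖) * 1 := by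
          apply mul_le_mul (hT z) hqn (norm_nonneg q)
          positivity
      _ = M * ‖z‖ := by ring
  have h2 : ⟪lam, tr q⟫ ≤ c_tr * ‖lam‖ := by
    calc ⟪lam, tr q⟫ ≤ ‖lam‖ * ‖tr q‖ := real_inner_le_norm _ _
      _ ≤ ‖lam‖ * (c_tr * 1) := by
          apply mul_le_mul_of_nonneg_left _ (norm_nonneg lam)
          calc ‖tr q‖ ≤ c_tr * ‖q‖ := htr q
            _ ≤ c_tr * 1 := by nlinarith
      _ = c_tr * ‖lam‖ := by ring
  have : ⟪D q, p⟫ = ⟪p, D q⟫ := real_inner_comm _ _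
  linarith
end

section
/- Let X, Z, W be real inner product spaces, A : X →L[ℝ] X and T : Z →L[ℝ] Z continuous linear operators, each symmetric (⟪A σ, τ⟫ = ⟪σ, A τ⟫ and ⟪T q, r⟫ = ⟪q, T r⟫) and positive semidefinite (0 ≤ ⟪A τ, τ⟫ and 0 ≤ ⟪T q, q⟫), ι : W →ₗ[ℝ] X and D : Z →ₗ[ℝ] W linear maps, and let c₀ ≥ 0, Δt > 0, α ∈ ℝ. Suppose z, z' ∈ Z, p, p' ∈ W and ζ ∈ X satisfy: (i) ⟪T(z' − z), q⟫ = ⟪p' − p, D q⟫ for all q ∈ Z; (ii) (c₀/Δt)⟪p' − p, w⟫ + (α²/Δt)⟪A ι(p' − p), ι w⟫ + ⟪D z', w⟫ = −(α/Δt)⟪A ζ, ι w⟫ for all w ∈ W. Then (c₀/Δt)‖p' − p‖² + (α²/(2Δt))⟪A ι(p' − p), ι(p' − p)⟫ + (1/2)⟪T(z' − z), z' − z⟫ + (1/2)⟪T z', z'⟫ ≤ (1/2)⟪T z, z⟫ + (1/(2Δt))⟪A ζ, ζ⟫. -/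
open scoped RealInnerProductSpace

/-- Abstract per-time-step flow energy inequality for the split schemes. -/
theorem stmt_4 {X Z W : Type*}
    [NormedAddCommGroup X] [InnerProductSpace ℝ X]
    [NormedAddCommGroup Z] [InnerProductSpace ℝ Z]
    [NormedAddCommGroup W] [InnerProductSpace ℝ W]
    (A : X →L[ℝ] X) (T : Z →L[ℝ] Z)
    (hAsym : ∀ σ τ : X, ⟪A σ, τ⟫ = ⟪σ, A τ⟫)
    (hApos : ∀ τ : X, 0 ≤ ⟪A τ, τ⟫)
    (hTsym : ∀ q r : Z, ⟪T q, r⟫ = ⟪q, T r⟫)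
    (hTpos : ∀ q : Z, 0 ≤ ⟪T q, q⟫)
    (ι : W →ₗ[ℝ] X) (D : Z →ₗ[ℝ] W)
    (c₀ Δt α : ℝ) (hc₀ : 0 ≤ c₀) (hΔt : 0 < Δt)
    (z z' : Z) (p p' : W) (ζ : X)
    (h1 : ∀ q : Z, ⟪T (z' - z), q⟫ = ⟪p' - p, D q⟫)
    (h2 : ∀ w : W, c₀ / Δt * ⟪p' - p, w⟫ + α ^ 2 / Δt * ⟪A (ι (p' - p)), ι w⟫
      + ⟪D z', w⟫ = -(α / Δt * ⟪A ζ, ι w⟫)) :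
    c₀ / Δt * ‖p' - p‖ ^ 2 + α ^ 2 / (2 * Δt) * ⟪A (ι (p' - p)), ι (p' - p)⟫
      + 1 / 2 * ⟪T (z' - z), z' - z⟫ + 1 / 2 * ⟪T z', z'⟫
    ≤ 1 / 2 * ⟪T z, z⟫ + 1 / (2 * Δt) * ⟪A ζ, ζ⟫ := by

  set x := ι (p' - p) with hx
  have hne : Δt ≠ 0 := hΔt.ne'
  have e1 : ⟪T (z' - z), z'⟫ = ⟪p' - p, D z'⟫ := h1 z'
  have e2 := h2 (p' - p)
  rw [← hx] at e2
  have hN : ⟪p' - p, p' - p⟫ = ‖p' - p‖ ^ 2 := real_inner_self_eq_norm_sq _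
  have e3 : 2 * ⟪T (z' - z), z'⟫
      = ⟪T (z' - z), z' - z⟫ + ⟪T z', z'⟫ - ⟪T z, z⟫ := by
    simp only [map_sub, inner_sub_left, inner_sub_right, ContinuousLinearMap.coe_sub',
      Pi.sub_apply]
    linarith [real_inner_comm (T z) z', real_inner_comm (T z') z, hTsym z z', hTsym z' z]
  have hs : ⟪A x, ζ⟫ = ⟪A ζ, x⟫ := by rw [hAsym, real_inner_comm]
  have young : -(α * ⟪A ζ, x⟫) ≤ 1 / 2 * ⟪A ζ, ζ⟫ + α ^ 2 / 2 * ⟪A x, x⟫ := by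
    have h0 := hApos (ζ + α • x)
    simp only [map_add, map_smul, inner_add_left, inner_add_right, inner_smul_left,
      inner_smul_right, RCLike.ofReal_real_eq_id, id, conj_trivial, hs] at h0
    nlinarith [h0]
  have young' : -(α / Δt * ⟪A ζ, x⟫)
      ≤ 1 / (2 * Δt) * ⟪A ζ, ζ⟫ + α ^ 2 / (2 * Δt) * ⟪A x, x⟫ := by
    have h := mul_le_mul_of_nonneg_left young (by positivity : (0:ℝ) ≤ 1 / Δt)
    have l1 : 1 / Δt * -(α * ⟪A ζ, x⟫) = -(α / Δt * ⟪A ζ, x⟫) := by ring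
    have l2 : 1 / Δt * (1 / 2 * ⟪A ζ, ζ⟫ + α ^ 2 / 2 * ⟪A x, x⟫)
        = 1 / (2 * Δt) * ⟪A ζ, ζ⟫ + α ^ 2 / (2 * Δt) * ⟪A x, x⟫ := by
      field_simp
    rw [l1, l2] at h
    exact h
  have hcomm : ⟪D z', p' - p⟫ = ⟪p' - p, D z'⟫ := real_inner_comm _ _
  rw [hN, hcomm, ← e1] at e2
  have r1 : α ^ 2 / Δt * ⟪A x, x⟫ = 2 * (α ^ 2 / (2 * Δt) * ⟪A x, x⟫) := by
    field_simp
  linarith [e2, e3, young', r1]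
end

section
/- Unconditional stability of the drained split scheme: Fix constants a_max > 0, 0 < k_min ≤ k_max, β_e > 0, β_d > 0, c_ι > 0 and 0 < α ≤ 1. There exists a constant C, depending only on α, a_max, k_min, k_max, β_e, β_d and c_ι — in particular independent of N, Δt, c₀, a_min and of the spaces, operators and sequences below — such that the following holds. Let X, V, Q, Z, W be real inner product spaces; A : X →L[ℝ] X symmetric with a_min ‖τ‖² ≤ ⟪A τ, τ⟫ ≤ a_max ‖τ‖² for all τ (for some a_min > 0); T : Z →L[ℝ] Z symmetric with (1/k_max)‖q‖² ≤ ⟪T q, q⟫ ≤ (1/k_min)‖q‖² for all q; Dₑ : X →ₗ V, S : X →ₗ Q, D : Z →ₗ W linear maps satisfying the elasticity inf-sup condition with constant β_e and the Darcy inf-sup condition with constant β_d; ι : W →ₗ X linear with ‖ι w‖ ≤ c_ι ‖w‖ for all w; c₀ ≥ 0, Δt > 0, N ≥ 1. Suppose σ⁰,…,σᴺ ∈ X, u⁰,…,uᴺ ∈ V, γ⁰,…,γᴺ ∈ Q, z⁰,…,zᴺ ∈ Z, p⁰,…,pᴺ ∈ W satisfy, with the convention p^{−1} := p⁰, for every n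 = −1, 0, …, N−1: (i) ⟪A σ^{n+1}, τ⟫ + ⟪u^{n+1}, Dₑ τ⟫ + ⟪γ^{n+1}, S τ⟫ = −α ⟪A(ι p^{n}), τ⟫ for all τ ∈ X; (ii) Dₑ σ^{n+1} = 0; (iii) S σ^{n+1} = 0; (iv) ⟪T z^{n+1}, q⟫ = ⟪p^{n+1}, D q⟫ for all q ∈ Z; and for every n = 0, …, N−1: (v) (c₀/Δt)⟪p^{n+1} − p^{n}, w⟫ + (α²/Δt)⟪A ι(p^{n+1} − p^{n}), ι w⟫ + ⟪D z^{n+1}, w⟫ = −(α/Δt)⟪A(σ^{n+1} − σ^{n}), ι w⟫ for all w ∈ W. Then Σ_{n=0}^{N−1} (c₀/Δt)‖p^{n+1} − p^{n}‖² + max_{0 ≤ n ≤ N−1} ( ‖z^{n+1}‖² + ‖p^{n+1}‖² + ⟪A σ^{n+1}, σ^{n+1}⟫ + ‖u^{n+1}‖² + ‖γ^{n+1}‖² ) ≤ C (‖p⁰‖² + ‖z⁰‖²). -/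
open scoped RealInnerProductSpace

private lemma gcs {E : Type*} [NormedAddCommGroup E] [InnerProductSpace ℝ E] (B : E →L[ℝ] E)
    (hsym : ∀ x y : E, ⟪B x, y⟫ = ⟪x, B y⟫) (hpos : ∀ x : E, 0 ≤ ⟪B x, x⟫) (x y : E) :
    |⟪B x, y⟫| ≤ Real.sqrt ⟪B x, x⟫ * Real.sqrt ⟪B y, y⟫ := by
  have key : ∀ t : ℝ, 0 ≤ ⟪B y, y⟫ * (t * t) + (2 * ⟪B x, y⟫) * t + ⟪B x, x⟫ := by
    intro t
    have h0 := hpos (x + t • y)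
    have e1 : ⟪B (x + t • y), x + t • y⟫
        = ⟪B x, x⟫ + t * ⟪B x, y⟫ + t * ⟪B y, x⟫ + (t * t) * ⟪B y, y⟫ := by
      simp [map_add, map_smul, inner_add_left, inner_add_right, real_inner_smul_left,
        real_inner_smul_right]
      ring
    have e2 : ⟪B y, x⟫ = ⟪B x, y⟫ := by rw [hsym, real_inner_comm]
    rw [e1, e2] at h0
    nlinarith [h0]
  have hd := discrim_le_zero key
  rw [discrim] at hd
  have hb2 : ⟪B x, y⟫ ^ 2 ≤ ⟪B x, x⟫ * ⟪B y, y⟫ := by nlinarith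
  calc |⟪B x, y⟫| = Real.sqrt (⟪B x, y⟫ ^ 2) := by rw [Real.sqrt_sq_eq_abs]
    _ ≤ Real.sqrt (⟪B x, x⟫ * ⟪B y, y⟫) := Real.sqrt_le_sqrt hb2
    _ = Real.sqrt ⟪B x, x⟫ * Real.sqrt ⟪B y, y⟫ := Real.sqrt_mul (hpos x) _

private lemma le_of_sq {s K : ℝ} (hs : 0 ≤ s) (hK : 0 ≤ K) (h : s ^ 2 ≤ K * s) : s ≤ K := by
  nlinarith

private lemma amgm (x y : ℝ) (hx : 0 ≤ x) (hy : 0 ≤ y) :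
    Real.sqrt x * Real.sqrt y ≤ (x + y) / 2 := by
  nlinarith [sq_nonneg (Real.sqrt x - Real.sqrt y), Real.sq_sqrt hx, Real.sq_sqrt hy]

private lemma telescope (N : ℕ) (F g : ℕ → ℝ)
    (hstep : ∀ n < N, g n + F (n + 1) ≤ F n) :
    ∀ m ≤ N, (∑ k ∈ Finset.range m, g k) + F m ≤ F 0 := by
  intro m hm
  induction m with
  | zero => simp
  | succ m ih =>
    have h1 := ih (Nat.le_of_succ_le hm)
    have h2 := hstep m (Nat.lt_of_succ_le hm)
    rw [Finset.sum_range_succ]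
    linarith

set_option maxHeartbeats 1600000 in
/-- Unconditional stability of the drained split scheme (abstract algebraic form).
The indices follow the convention `p^{-1} := p⁰`, realized via truncated natural
subtraction: equations (i)–(iv) are stated at levels `n = 0, …, N` with data
`p (n - 1)`, and equation (v) at steps `n = 0, …, N-1`. -/
theorem stmt_5 (α a_max k_min k_max β_e β_d c_ι : ℝ)
    (hα0 : 0 < α) (hα1 : α ≤ 1) (ha_max : 0 < a_max)
    (hk_min : 0 < k_min) (hk : k_min ≤ k_max)
    (hβ_e : 0 < β_e) (hβ_d : 0 < β_d) (hc_ι : 0 < c_ι) :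
    ∃ C : ℝ, ∀ (X V Q Z W : Type*)
      [NormedAddCommGroup X] [InnerProductSpace ℝ X]
      [NormedAddCommGroup V] [InnerProductSpace ℝ V]
      [NormedAddCommGroup Q] [InnerProductSpace ℝ Q]
      [NormedAddCommGroup Z] [InnerProductSpace ℝ Z]
      [NormedAddCommGroup W] [InnerProductSpace ℝ W]
      (A : X →L[ℝ] X) (T : Z →L[ℝ] Z)
      (De : X →ₗ[ℝ] V) (S : X →ₗ[ℝ] Q) (D : Z →ₗ[ℝ] W) (ι : W →ₗ[ℝ] X)
      (c₀ Δt : ℝ) (N : ℕ)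
      (σ : ℕ → X) (u : ℕ → V) (γ : ℕ → Q) (z : ℕ → Z) (p : ℕ → W)
      (hAsym : ∀ σ' τ : X, ⟪A σ', τ⟫ = ⟪σ', A τ⟫)
      (hAlow : ∃ a_min : ℝ, 0 < a_min ∧ ∀ τ : X, a_min * ‖τ‖ ^ 2 ≤ ⟪A τ, τ⟫)
      (hAup : ∀ τ : X, ⟪A τ, τ⟫ ≤ a_max * ‖τ‖ ^ 2)
      (hTsym : ∀ q r : Z, ⟪T q, r⟫ = ⟪q, T r⟫)
      (hTlow : ∀ q : Z, 1 / k_max * ‖q‖ ^ 2 ≤ ⟪T q, q⟫)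
      (hTup : ∀ q : Z, ⟪T q, q⟫ ≤ 1 / k_min * ‖q‖ ^ 2)
      (hinfsupE : ∀ (v : V) (ξ : Q), ∃ τ : X,
        Real.sqrt (‖τ‖ ^ 2 + ‖De τ‖ ^ 2) ≤ 1 ∧
        β_e * (‖v‖ + ‖ξ‖) ≤ ⟪v, De τ⟫ + ⟪ξ, S τ⟫)
      (hinfsupD : ∀ w : W, ∃ q : Z,
        Real.sqrt (‖q‖ ^ 2 + ‖D q‖ ^ 2) ≤ 1 ∧ β_d * ‖w‖ ≤ ⟪D q, w⟫)
      (hι : ∀ w : W, ‖ι w‖ ≤ c_ι * ‖w‖)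
      (hc₀ : 0 ≤ c₀) (hΔt : 0 < Δt) (hN : 1 ≤ N)
      (hi : ∀ n : ℕ, n ≤ N → ∀ τ : X,
        ⟪A (σ n), τ⟫ + ⟪u n, De τ⟫ + ⟪γ n, S τ⟫ = -(α * ⟪A (ι (p (n - 1))), τ⟫))
      (hii : ∀ n : ℕ, n ≤ N → De (σ n) = 0)
      (hiii : ∀ n : ℕ, n ≤ N → S (σ n) = 0)
      (hiv : ∀ n : ℕ, n ≤ N → ∀ q : Z, ⟪T (z n), q⟫ = ⟪p n, D q⟫)
      (hv : ∀ n : ℕ, n < N → ∀ w : W,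
        c₀ / Δt * ⟪p (n + 1) - p n, w⟫
          + α ^ 2 / Δt * ⟪A (ι (p (n + 1) - p n)), ι w⟫
          + ⟪D (z (n + 1)), w⟫
        = -(α / Δt * ⟪A (σ (n + 1) - σ n), ι w⟫)),
      (∑ n ∈ Finset.range N, c₀ / Δt * ‖p (n + 1) - p n‖ ^ 2)
        + ((Finset.range N).sup'
            (Finset.nonempty_range_iff.mpr (Nat.one_le_iff_ne_zero.mp hN))
            fun n => ‖z (n + 1)‖ ^ 2 + ‖p (n + 1)‖ ^ 2
              + ⟪A (σ (n + 1)), σ (n + 1)⟫ + ‖u (n + 1)‖ ^ 2 + ‖γ (n + 1)‖ ^ 2)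
      ≤ C * (‖p 0‖ ^ 2 + ‖z 0‖ ^ 2) := by
  refine ⟨1 / (2 * k_min) + k_max / k_min + 1 / (β_d ^ 2 * k_min ^ 2)
      + (a_max * c_ι ^ 2 + 4 * a_max ^ 2 * c_ι ^ 2 / β_e ^ 2)
        * (1 + 1 / (β_d ^ 2 * k_min ^ 2)), ?_⟩
  intro X V Q Z W _ _ _ _ _ _ _ _ _ _ A T De S D ι c₀ Δt N σ u γ z p hAsym hAlow hAup
    hTsym hTlow hTup hinfsupE hinfsupD hι hc₀ hΔt hN hi hii hiii hiv hv
  obtain ⟨a_min, ha_min, hAlow⟩ := hAlow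
  have hk_max : (0:ℝ) < k_max := lt_of_lt_of_le hk_min hk
  have hApos : ∀ τ : X, 0 ≤ ⟪A τ, τ⟫ := fun τ =>
    le_trans (by positivity) (hAlow τ)
  have hTpos : ∀ q : Z, 0 ≤ ⟪T q, q⟫ := fun q =>
    le_trans (by positivity) (hTlow q)
  have hAcs := gcs A hAsym hApos
  have hTcs := gcs T hTsym hTpos
  have hsqA : ∀ τ : X, Real.sqrt ⟪A τ, τ⟫ ≤ Real.sqrt a_max * ‖τ‖ := by
    intro τ
    calc Real.sqrt ⟪A τ, τ⟫ ≤ Real.sqrt (a_max * ‖τ‖ ^ 2) := Real.sqrt_le_sqrt (hAup τ)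
      _ = Real.sqrt a_max * ‖τ‖ := by
          rw [Real.sqrt_mul ha_max.le, Real.sqrt_sq (norm_nonneg _)]
  have hsqT : ∀ q : Z, Real.sqrt ⟪T q, q⟫ ≤ Real.sqrt (1 / k_min) * ‖q‖ := by
    intro q
    calc Real.sqrt ⟪T q, q⟫ ≤ Real.sqrt (1 / k_min * ‖q‖ ^ 2) := Real.sqrt_le_sqrt (hTup q)
      _ = Real.sqrt (1 / k_min) * ‖q‖ := by
          rw [Real.sqrt_mul (by positivity), Real.sqrt_sq (norm_nonneg _)]
  -- A-norm of ι w
  have hsqAι : ∀ w : W, Real.sqrt ⟪A (ι w), ι w⟫ ≤ Real.sqrt a_max * (c_ι * ‖w‖) := by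
    intro w
    refine le_trans (hsqA (ι w)) ?_
    exact mul_le_mul_of_nonneg_left (hι w) (Real.sqrt_nonneg _)
  -- Key step estimate
  have hstep : ∀ n, n < N →
      c₀ / Δt * ‖p (n + 1) - p n‖ ^ 2
        + (α ^ 2 / (2 * Δt) * ⟪A (ι (p (n+1) - p (n+1-1))), ι (p (n+1) - p (n+1-1))⟫
            + 1 / 2 * ⟪T (z (n+1)), z (n+1)⟫)
      ≤ α ^ 2 / (2 * Δt) * ⟪A (ι (p n - p (n-1))), ι (p n - p (n-1))⟫
            + 1 / 2 * ⟪T (z n), z n⟫ := by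
    intro n hn
    have hn1 : n + 1 ≤ N := hn
    have hn0 : n ≤ N := le_of_lt hn
    simp only [Nat.add_sub_cancel]
    set δp : W := p (n + 1) - p n with hδp
    set Δσ : X := σ (n + 1) - σ n with hΔσ
    set dp : W := p n - p (n - 1) with hdp
    -- equation (v)
    have h5 := hv n hn δp
    rw [← hδp, real_inner_self_eq_norm_sq] at h5
    -- Darcy difference
    have h4 : ⟪D (z (n+1)), δp⟫ = ⟪T (z (n+1)), z (n+1)⟫ - ⟪T (z n), z (n+1)⟫ := by
      have ha := hiv (n+1) hn1 (z (n+1))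
      have hb := hiv n hn0 (z (n+1))
      have : ⟪δp, D (z (n+1))⟫ = ⟪p (n+1), D (z (n+1))⟫ - ⟪p n, D (z (n+1))⟫ := by
        rw [hδp, inner_sub_left]
      rw [real_inner_comm, this, ← ha, ← hb]
    have hmid : 1/2 * ⟪T (z (n+1)), z (n+1)⟫ - 1/2 * ⟪T (z n), z n⟫
        ≤ ⟪T (z (n+1)), z (n+1)⟫ - ⟪T (z n), z (n+1)⟫ := by
      have h0 := hTpos (z (n+1) - z n)
      have e1 : ⟪T (z (n+1) - z n), z (n+1) - z n⟫
          = ⟪T (z (n+1)), z (n+1)⟫ - ⟪T (z n), z (n+1)⟫ - ⟪T (z (n+1)), z n⟫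
            + ⟪T (z n), z n⟫ := by
        simp [map_sub, inner_sub_left, inner_sub_right]
        ring
      have e2 : ⟪T (z (n+1)), z n⟫ = ⟪T (z n), z (n+1)⟫ := by
        rw [hTsym, real_inner_comm]
      rw [e1, e2] at h0
      linarith
    -- stress difference estimate
    have hσd : Real.sqrt ⟪A Δσ, Δσ⟫ ≤ α * Real.sqrt ⟪A (ι dp), ι dp⟫ := by
      have e1 := hi (n+1) hn1 Δσ
      have e2 := hi n hn0 Δσ
      simp only [Nat.add_sub_cancel] at e1
      have hDe : De Δσ = 0 := by rw [hΔσ, map_sub, hii (n+1) hn1, hii n hn0, sub_zero]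
      have hS : S Δσ = 0 := by rw [hΔσ, map_sub, hiii (n+1) hn1, hiii n hn0, sub_zero]
      rw [hDe, hS, inner_zero_right, inner_zero_right, add_zero, add_zero] at e1 e2
      have ediff : ⟪A Δσ, Δσ⟫ = -(α * ⟪A (ι dp), Δσ⟫) := by
        have : ⟪A Δσ, Δσ⟫ = ⟪A (σ (n+1)), Δσ⟫ - ⟪A (σ n), Δσ⟫ := by
          rw [hΔσ, map_sub, inner_sub_left]
        rw [this, e1, e2]
        have : ⟪A (ι dp), Δσ⟫ = ⟪A (ι (p n)), Δσ⟫ - ⟪A (ι (p (n-1))), Δσ⟫ := by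
          rw [hdp, map_sub, map_sub, inner_sub_left]
        rw [this]; ring
      have hb : |⟪A (ι dp), Δσ⟫| ≤ Real.sqrt ⟪A (ι dp), ι dp⟫ * Real.sqrt ⟪A Δσ, Δσ⟫ :=
        hAcs (ι dp) Δσ
      refine le_of_sq (Real.sqrt_nonneg _) (by positivity) ?_
      rw [Real.sq_sqrt (hApos Δσ)]
      calc ⟪A Δσ, Δσ⟫ = -(α * ⟪A (ι dp), Δσ⟫) := ediff
        _ = α * -⟪A (ι dp), Δσ⟫ := by ring
        _ ≤ α * |⟪A (ι dp), Δσ⟫| := mul_le_mul_of_nonneg_left (neg_le_abs _) hα0.le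
        _ ≤ α * (Real.sqrt ⟪A (ι dp), ι dp⟫ * Real.sqrt ⟪A Δσ, Δσ⟫) :=
            mul_le_mul_of_nonneg_left hb hα0.le
        _ = α * Real.sqrt ⟪A (ι dp), ι dp⟫ * Real.sqrt ⟪A Δσ, Δσ⟫ := by ring
    -- bound for RHS of (v)
    have hR : -(α / Δt * ⟪A Δσ, ι δp⟫)
        ≤ α ^ 2 / (2 * Δt) * (⟪A (ι dp), ι dp⟫ + ⟪A (ι δp), ι δp⟫) := by
      have hαΔt : 0 ≤ α / Δt := by positivity
      have hb : |⟪A Δσ, ι δp⟫| ≤ Real.sqrt ⟪A Δσ, Δσ⟫ * Real.sqrt ⟪A (ι δp), ι δp⟫ :=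
        hAcs Δσ (ι δp)
      have h1 : |⟪A Δσ, ι δp⟫|
          ≤ α * Real.sqrt ⟪A (ι dp), ι dp⟫ * Real.sqrt ⟪A (ι δp), ι δp⟫ :=
        le_trans hb (mul_le_mul_of_nonneg_right hσd (Real.sqrt_nonneg _))
      have h2 : Real.sqrt ⟪A (ι dp), ι dp⟫ * Real.sqrt ⟪A (ι δp), ι δp⟫
          ≤ (⟪A (ι dp), ι dp⟫ + ⟪A (ι δp), ι δp⟫) / 2 :=
        amgm _ _ (hApos _) (hApos _)
      have h2' : |⟪A Δσ, ι δp⟫| ≤ α * ((⟪A (ι dp), ι dp⟫ + ⟪A (ι δp), ι δp⟫) / 2) := by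
        refine le_trans h1 ?_
        calc α * Real.sqrt ⟪A (ι dp), ι dp⟫ * Real.sqrt ⟪A (ι δp), ι δp⟫
            = α * (Real.sqrt ⟪A (ι dp), ι dp⟫ * Real.sqrt ⟪A (ι δp), ι δp⟫) := by ring
          _ ≤ α * ((⟪A (ι dp), ι dp⟫ + ⟪A (ι δp), ι δp⟫) / 2) :=
            mul_le_mul_of_nonneg_left h2 hα0.le
      have h3 : -(α / Δt * ⟪A Δσ, ι δp⟫) ≤ α / Δt * |⟪A Δσ, ι δp⟫| := by
        calc -(α / Δt * ⟪A Δσ, ι δp⟫) = α / Δt * -⟪A Δσ, ι δp⟫ := by ring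
          _ ≤ α / Δt * |⟪A Δσ, ι δp⟫| := mul_le_mul_of_nonneg_left (neg_le_abs _) hαΔt
      have h4 : α / Δt * |⟪A Δσ, ι δp⟫|
          ≤ α / Δt * (α * ((⟪A (ι dp), ι dp⟫ + ⟪A (ι δp), ι δp⟫) / 2)) :=
        mul_le_mul_of_nonneg_left h2' hαΔt
      have h5 : α / Δt * (α * ((⟪A (ι dp), ι dp⟫ + ⟪A (ι δp), ι δp⟫) / 2))
          = α ^ 2 / (2 * Δt) * (⟪A (ι dp), ι dp⟫ + ⟪A (ι δp), ι δp⟫) := by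
        field_simp
      linarith
    -- combine
    have hdiv : α ^ 2 / Δt = 2 * (α ^ 2 / (2 * Δt)) := by field_simp
    rw [h4] at h5
    rw [hdiv] at h5
    linarith
  have tel := telescope N
    (fun m => α ^ 2 / (2 * Δt) * ⟪A (ι (p m - p (m-1))), ι (p m - p (m-1))⟫
      + 1 / 2 * ⟪T (z m), z m⟫)
    (fun n => c₀ / Δt * ‖p (n + 1) - p n‖ ^ 2) hstep
  have hF0 : α ^ 2 / (2 * Δt) * ⟪A (ι (p 0 - p (0-1))), ι (p 0 - p (0-1))⟫
      + 1 / 2 * ⟪T (z 0), z 0⟫ = 1 / 2 * ⟪T (z 0), z 0⟫ := by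
    norm_num
  rw [hF0] at tel
  have hTQ0 : ⟪T (z 0), z 0⟫ ≤ 1 / k_min * ‖z 0‖ ^ 2 := hTup _
  -- TQ m ≤ TQ 0 for m ≤ N
  have hTQle : ∀ m, m ≤ N → ⟪T (z m), z m⟫ ≤ ⟪T (z 0), z 0⟫ := by
    intro m hm
    have h := tel m hm
    have hsum : 0 ≤ ∑ k ∈ Finset.range m, c₀ / Δt * ‖p (k + 1) - p k‖ ^ 2 :=
      Finset.sum_nonneg fun k _ => by positivity
    have hap : 0 ≤ ⟪A (ι (p m - p (m-1))), ι (p m - p (m-1))⟫ := hApos _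
    have hc : 0 ≤ α ^ 2 / (2 * Δt) := by positivity
    linarith [mul_nonneg hc hap]
  -- sum bound
  have hsumle : (∑ n ∈ Finset.range N, c₀ / Δt * ‖p (n + 1) - p n‖ ^ 2)
      ≤ 1 / (2 * k_min) * ‖z 0‖ ^ 2 := by
    have h := tel N le_rfl
    have hap : 0 ≤ ⟪A (ι (p N - p (N-1))), ι (p N - p (N-1))⟫ := hApos _
    have hTN : 0 ≤ ⟪T (z N), z N⟫ := hTpos _
    have h2 : 0 ≤ α ^ 2 / (2 * Δt) := by positivity
    have : 1 / 2 * ⟪T (z 0), z 0⟫ ≤ 1 / (2 * k_min) * ‖z 0‖ ^ 2 := by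
      have e : 1 / (2 * k_min) * ‖z 0‖ ^ 2 = 1 / 2 * (1 / k_min * ‖z 0‖ ^ 2) := by
        field_simp
      rw [e]
      linarith [hTQ0]
    linarith [mul_nonneg h2 hap]
  -- pressure bound
  have hp : ∀ m, m ≤ N → ‖p m‖ ^ 2 ≤ 1 / (β_d ^ 2 * k_min ^ 2) * ‖z 0‖ ^ 2 := by
    intro m hm
    obtain ⟨q, hq1, hq2⟩ := hinfsupD (p m)
    have hqn : ‖q‖ ≤ 1 := by
      have h1 : Real.sqrt (‖q‖ ^ 2) ≤ Real.sqrt (‖q‖ ^ 2 + ‖D q‖ ^ 2) :=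
        Real.sqrt_le_sqrt (by linarith [sq_nonneg ‖D q‖])
      rw [Real.sqrt_sq (norm_nonneg _)] at h1
      linarith
    have hDq : ⟪D q, p m⟫ = ⟪T (z m), q⟫ := by
      rw [hiv m hm q, real_inner_comm]
    have hb : ⟪T (z m), q⟫ ≤ Real.sqrt ⟪T (z m), z m⟫ * Real.sqrt ⟪T q, q⟫ :=
      le_trans (le_abs_self _) (hTcs (z m) q)
    have hszm : Real.sqrt ⟪T (z m), z m⟫ ≤ Real.sqrt ⟪T (z 0), z 0⟫ :=
      Real.sqrt_le_sqrt (hTQle m hm)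
    have hsq : Real.sqrt ⟪T q, q⟫ ≤ Real.sqrt (1 / k_min) := by
      refine le_trans (hsqT q) ?_
      calc Real.sqrt (1 / k_min) * ‖q‖ ≤ Real.sqrt (1 / k_min) * 1 :=
            mul_le_mul_of_nonneg_left hqn (Real.sqrt_nonneg _)
        _ = Real.sqrt (1 / k_min) := mul_one _
    have hsz0 : Real.sqrt ⟪T (z 0), z 0⟫ ≤ Real.sqrt (1 / k_min) * ‖z 0‖ := hsqT _
    have key : β_d * ‖p m‖ ≤ (Real.sqrt (1 / k_min) * ‖z 0‖) * Real.sqrt (1 / k_min) := by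
      calc β_d * ‖p m‖ ≤ ⟪D q, p m⟫ := hq2
        _ = ⟪T (z m), q⟫ := hDq
        _ ≤ Real.sqrt ⟪T (z m), z m⟫ * Real.sqrt ⟪T q, q⟫ := hb
        _ ≤ Real.sqrt ⟪T (z 0), z 0⟫ * Real.sqrt (1 / k_min) :=
            mul_le_mul hszm hsq (Real.sqrt_nonneg _) (Real.sqrt_nonneg _)
        _ ≤ (Real.sqrt (1 / k_min) * ‖z 0‖) * Real.sqrt (1 / k_min) :=
            mul_le_mul_of_nonneg_right hsz0 (Real.sqrt_nonneg _)
    have hs2 : Real.sqrt (1 / k_min) * Real.sqrt (1 / k_min) = 1 / k_min :=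
      Real.mul_self_sqrt (by positivity)
    have key2 : β_d * ‖p m‖ ≤ 1 / k_min * ‖z 0‖ := by
      refine le_trans key ?_
      rw [show (Real.sqrt (1 / k_min) * ‖z 0‖) * Real.sqrt (1 / k_min)
          = (Real.sqrt (1 / k_min) * Real.sqrt (1 / k_min)) * ‖z 0‖ from by ring, hs2]
    have key3 : β_d * ‖p m‖ * k_min ≤ ‖z 0‖ := by
      have h := mul_le_mul_of_nonneg_right key2 hk_min.le
      have e2 : 1 / k_min * ‖z 0‖ * k_min = ‖z 0‖ := by field_simp
      rw [e2] at h
      exact h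
    have hnn : 0 ≤ β_d * ‖p m‖ * k_min := by positivity
    have key4 := pow_le_pow_left₀ hnn key3 2
    have hβ2 : (0:ℝ) < β_d ^ 2 * k_min ^ 2 := by positivity
    rw [div_mul_eq_mul_div, one_mul, le_div_iff₀ hβ2]
    have e3 : (β_d * ‖p m‖ * k_min) ^ 2 = ‖p m‖ ^ 2 * (β_d ^ 2 * k_min ^ 2) := by ring
    rw [e3] at key4
    exact key4
  -- Pb bound for all indices ≤ N
  obtain ⟨Pb, hPbdef⟩ : ∃ Pb : ℝ, Pb = ‖p 0‖ ^ 2 + 1 / (β_d ^ 2 * k_min ^ 2) * ‖z 0‖ ^ 2 :=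
    ⟨_, rfl⟩
  have hPb : ∀ k, k ≤ N → ‖p k‖ ^ 2 ≤ Pb := by
    intro k hk'
    have h := hp k hk'
    have hP0 : (0:ℝ) ≤ ‖p 0‖ ^ 2 := sq_nonneg _
    rw [hPbdef]
    linarith
  have hPbnn : 0 ≤ Pb := by rw [hPbdef]; positivity
  -- stress bound
  have hσb : ∀ m, 1 ≤ m → m ≤ N → Real.sqrt ⟪A (σ m), σ m⟫
      ≤ Real.sqrt a_max * (c_ι * ‖p (m-1)‖) := by
    intro m hm1 hm
    have e := hi m hm (σ m)
    rw [hii m hm, hiii m hm, inner_zero_right, inner_zero_right, add_zero, add_zero] at e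
    have hb : |⟪A (ι (p (m-1))), σ m⟫|
        ≤ Real.sqrt ⟪A (ι (p (m-1))), ι (p (m-1))⟫ * Real.sqrt ⟪A (σ m), σ m⟫ :=
      hAcs _ _
    have hι1 := hsqAι (p (m-1))
    refine le_of_sq (Real.sqrt_nonneg _) (by positivity) ?_
    rw [Real.sq_sqrt (hApos _)]
    calc ⟪A (σ m), σ m⟫ = -(α * ⟪A (ι (p (m-1))), σ m⟫) := e
      _ = α * -⟪A (ι (p (m-1))), σ m⟫ := by ring
      _ ≤ α * |⟪A (ι (p (m-1))), σ m⟫| :=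
          mul_le_mul_of_nonneg_left (neg_le_abs _) hα0.le
      _ ≤ 1 * |⟪A (ι (p (m-1))), σ m⟫| :=
          mul_le_mul_of_nonneg_right hα1 (abs_nonneg _)
      _ = |⟪A (ι (p (m-1))), σ m⟫| := one_mul _
      _ ≤ Real.sqrt ⟪A (ι (p (m-1))), ι (p (m-1))⟫ * Real.sqrt ⟪A (σ m), σ m⟫ := hb
      _ ≤ Real.sqrt a_max * (c_ι * ‖p (m-1)‖) * Real.sqrt ⟪A (σ m), σ m⟫ :=
          mul_le_mul_of_nonneg_right hι1 (Real.sqrt_nonneg _)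
  -- per-element bound for the sup'
  have helem : ∀ n ∈ Finset.range N,
      ‖z (n + 1)‖ ^ 2 + ‖p (n + 1)‖ ^ 2 + ⟪A (σ (n + 1)), σ (n + 1)⟫
        + ‖u (n + 1)‖ ^ 2 + ‖γ (n + 1)‖ ^ 2
      ≤ k_max / k_min * ‖z 0‖ ^ 2 + 1 / (β_d ^ 2 * k_min ^ 2) * ‖z 0‖ ^ 2
        + (a_max * c_ι ^ 2 + 4 * a_max ^ 2 * c_ι ^ 2 / β_e ^ 2) * Pb := by
    intro n hnmem
    have hn : n < N := Finset.mem_range.mp hnmem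
    have hm1 : (1:ℕ) ≤ n + 1 := Nat.le_add_left 1 n
    have hmN : n + 1 ≤ N := hn
    have hnN : n ≤ N := le_of_lt hn
    -- z bound
    have hz : ‖z (n+1)‖ ^ 2 ≤ k_max / k_min * ‖z 0‖ ^ 2 := by
      have h1 := hTlow (z (n+1))
      have h2 := hTQle (n+1) hmN
      have h3 := hTQ0
      have h4 : 1 / k_max * ‖z (n+1)‖ ^ 2 ≤ 1 / k_min * ‖z 0‖ ^ 2 := by linarith
      have e : ‖z (n+1)‖ ^ 2 = k_max * (1 / k_max * ‖z (n+1)‖ ^ 2) := by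
        field_simp
      rw [e]
      calc k_max * (1 / k_max * ‖z (n+1)‖ ^ 2) ≤ k_max * (1 / k_min * ‖z 0‖ ^ 2) :=
            mul_le_mul_of_nonneg_left h4 hk_max.le
        _ = k_max / k_min * ‖z 0‖ ^ 2 := by ring
    -- p bound
    have hpz := hp (n+1) hmN
    -- σ bound
    have hσs := hσb (n+1) hm1 hmN
    simp only [Nat.add_sub_cancel] at hσs
    have hpn := hPb n hnN
    have hσ2 : ⟪A (σ (n+1)), σ (n+1)⟫ ≤ a_max * c_ι ^ 2 * Pb := by
      have hs := Real.sqrt_nonneg ⟪A (σ (n+1)), σ (n+1)⟫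
      have h2 := pow_le_pow_left₀ hs hσs 2
      rw [Real.sq_sqrt (hApos _)] at h2
      have h3 : (Real.sqrt a_max * (c_ι * ‖p n‖)) ^ 2 = a_max * c_ι ^ 2 * ‖p n‖ ^ 2 := by
        rw [mul_pow, mul_pow, Real.sq_sqrt ha_max.le]; ring
      rw [h3] at h2
      calc ⟪A (σ (n+1)), σ (n+1)⟫ ≤ a_max * c_ι ^ 2 * ‖p n‖ ^ 2 := h2
        _ ≤ a_max * c_ι ^ 2 * Pb := mul_le_mul_of_nonneg_left hpn (by positivity)
    -- u γ bound
    have huγ : ‖u (n+1)‖ ^ 2 + ‖γ (n+1)‖ ^ 2 ≤ 4 * a_max ^ 2 * c_ι ^ 2 / β_e ^ 2 * Pb := by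
      obtain ⟨τ, hτ1, hτ2⟩ := hinfsupE (u (n+1)) (γ (n+1))
      have hτn : ‖τ‖ ≤ 1 := by
        have h1 : Real.sqrt (‖τ‖ ^ 2) ≤ Real.sqrt (‖τ‖ ^ 2 + ‖De τ‖ ^ 2) :=
          Real.sqrt_le_sqrt (by linarith [sq_nonneg ‖De τ‖])
        rw [Real.sqrt_sq (norm_nonneg _)] at h1
        linarith
      have e := hi (n+1) hmN τ
      simp only [Nat.add_sub_cancel] at e
      have e' : ⟪u (n+1), De τ⟫ + ⟪γ (n+1), S τ⟫
          = -(α * ⟪A (ι (p n)), τ⟫) - ⟪A (σ (n+1)), τ⟫ := by linarith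
      have hb1 : |⟪A (σ (n+1)), τ⟫|
          ≤ Real.sqrt ⟪A (σ (n+1)), σ (n+1)⟫ * Real.sqrt ⟪A τ, τ⟫ := hAcs _ _
      have hb2 : |⟪A (ι (p n)), τ⟫|
          ≤ Real.sqrt ⟪A (ι (p n)), ι (p n)⟫ * Real.sqrt ⟪A τ, τ⟫ := hAcs _ _
      have hKnn : (0:ℝ) ≤ Real.sqrt a_max := Real.sqrt_nonneg _
      have hτA : Real.sqrt ⟪A τ, τ⟫ ≤ Real.sqrt a_max := by
        refine le_trans (hsqA τ) ?_
        calc Real.sqrt a_max * ‖τ‖ ≤ Real.sqrt a_max * 1 :=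
              mul_le_mul_of_nonneg_left hτn hKnn
          _ = Real.sqrt a_max := mul_one _
      have hιp := hsqAι (p n)
      have hE : (Real.sqrt a_max * (c_ι * ‖p n‖)) * Real.sqrt a_max
          = a_max * c_ι * ‖p n‖ := by
        rw [show (Real.sqrt a_max * (c_ι * ‖p n‖)) * Real.sqrt a_max
            = (Real.sqrt a_max * Real.sqrt a_max) * (c_ι * ‖p n‖) from by ring,
          Real.mul_self_sqrt ha_max.le]
        ring
      have h2 : |⟪A (ι (p n)), τ⟫| ≤ a_max * c_ι * ‖p n‖ := by
        rw [← hE]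
        exact le_trans hb2 (mul_le_mul hιp hτA (Real.sqrt_nonneg _) (by positivity))
      have h3 : |⟪A (σ (n+1)), τ⟫| ≤ a_max * c_ι * ‖p n‖ := by
        rw [← hE]
        exact le_trans hb1 (mul_le_mul hσs hτA (Real.sqrt_nonneg _) (by positivity))
      have hstep1 : β_e * (‖u (n+1)‖ + ‖γ (n+1)‖) ≤ 2 * a_max * c_ι * ‖p n‖ := by
        have hA1 : α * |⟪A (ι (p n)), τ⟫| ≤ |⟪A (ι (p n)), τ⟫| :=
          mul_le_of_le_one_left (abs_nonneg _) hα1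
        calc β_e * (‖u (n+1)‖ + ‖γ (n+1)‖) ≤ ⟪u (n+1), De τ⟫ + ⟪γ (n+1), S τ⟫ := hτ2
          _ = -(α * ⟪A (ι (p n)), τ⟫) - ⟪A (σ (n+1)), τ⟫ := e'
          _ ≤ α * |⟪A (ι (p n)), τ⟫| + |⟪A (σ (n+1)), τ⟫| := by
              have l1 : -(α * ⟪A (ι (p n)), τ⟫) ≤ α * |⟪A (ι (p n)), τ⟫| := by
                calc -(α * ⟪A (ι (p n)), τ⟫) = α * -⟪A (ι (p n)), τ⟫ := by ring
                  _ ≤ α * |⟪A (ι (p n)), τ⟫| :=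
                    mul_le_mul_of_nonneg_left (neg_le_abs _) hα0.le
              have l2 : -⟪A (σ (n+1)), τ⟫ ≤ |⟪A (σ (n+1)), τ⟫| := neg_le_abs _
              linarith
          _ ≤ |⟪A (ι (p n)), τ⟫| + |⟪A (σ (n+1)), τ⟫| := by linarith
          _ ≤ a_max * c_ι * ‖p n‖ + a_max * c_ι * ‖p n‖ := by linarith
          _ = 2 * a_max * c_ι * ‖p n‖ := by ring
      have hsum : ‖u (n+1)‖ + ‖γ (n+1)‖ ≤ 2 * a_max * c_ι * ‖p n‖ / β_e := by
        rw [le_div_iff₀ hβ_e]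
        linarith [hstep1]
      have hun : 0 ≤ ‖u (n+1)‖ := norm_nonneg _
      have hγn : 0 ≤ ‖γ (n+1)‖ := norm_nonneg _
      have hsum2 := pow_le_pow_left₀ (by positivity) hsum 2
      have heq : (2 * a_max * c_ι * ‖p n‖ / β_e) ^ 2
          = 4 * a_max ^ 2 * c_ι ^ 2 / β_e ^ 2 * ‖p n‖ ^ 2 := by
        field_simp; ring
      rw [heq] at hsum2
      have hc4 : (0:ℝ) ≤ 4 * a_max ^ 2 * c_ι ^ 2 / β_e ^ 2 := by positivity
      have hsplit : ‖u (n+1)‖ ^ 2 + ‖γ (n+1)‖ ^ 2 ≤ (‖u (n+1)‖ + ‖γ (n+1)‖) ^ 2 := by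
        have e4 : (‖u (n+1)‖ + ‖γ (n+1)‖) ^ 2
            = ‖u (n+1)‖ ^ 2 + 2 * (‖u (n+1)‖ * ‖γ (n+1)‖) + ‖γ (n+1)‖ ^ 2 := by ring
        rw [e4]
        linarith [mul_nonneg hun hγn]
      have hlast : 4 * a_max ^ 2 * c_ι ^ 2 / β_e ^ 2 * ‖p n‖ ^ 2
          ≤ 4 * a_max ^ 2 * c_ι ^ 2 / β_e ^ 2 * Pb :=
        mul_le_mul_of_nonneg_left hpn hc4
      linarith
    have hcomb : ⟪A (σ (n+1)), σ (n+1)⟫ + (‖u (n+1)‖ ^ 2 + ‖γ (n+1)‖ ^ 2)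
        ≤ (a_max * c_ι ^ 2 + 4 * a_max ^ 2 * c_ι ^ 2 / β_e ^ 2) * Pb := by
      have e5 : (a_max * c_ι ^ 2 + 4 * a_max ^ 2 * c_ι ^ 2 / β_e ^ 2) * Pb
          = a_max * c_ι ^ 2 * Pb + 4 * a_max ^ 2 * c_ι ^ 2 / β_e ^ 2 * Pb := by ring
      rw [e5]
      linarith
    linarith
  have hsup : ((Finset.range N).sup'
      (Finset.nonempty_range_iff.mpr (Nat.one_le_iff_ne_zero.mp hN))
      fun n => ‖z (n + 1)‖ ^ 2 + ‖p (n + 1)‖ ^ 2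
        + ⟪A (σ (n + 1)), σ (n + 1)⟫ + ‖u (n + 1)‖ ^ 2 + ‖γ (n + 1)‖ ^ 2)
      ≤ k_max / k_min * ‖z 0‖ ^ 2 + 1 / (β_d ^ 2 * k_min ^ 2) * ‖z 0‖ ^ 2
        + (a_max * c_ι ^ 2 + 4 * a_max ^ 2 * c_ι ^ 2 / β_e ^ 2) * Pb :=
    Finset.sup'_le _ _ helem
  -- final assembly
  have hP0 : (0:ℝ) ≤ ‖p 0‖ ^ 2 := sq_nonneg _
  have hZ0 : (0:ℝ) ≤ ‖z 0‖ ^ 2 := sq_nonneg _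
  have hc1 : (0:ℝ) ≤ 1 / (2 * k_min) := by positivity
  have hc2 : (0:ℝ) ≤ k_max / k_min := by positivity
  have hc3 : (0:ℝ) ≤ 1 / (β_d ^ 2 * k_min ^ 2) := by positivity
  have hc4 : (0:ℝ) ≤ a_max * c_ι ^ 2 + 4 * a_max ^ 2 * c_ι ^ 2 / β_e ^ 2 := by positivity
  rw [hPbdef] at hsup
  have goal_eq : (1 / (2 * k_min) + k_max / k_min + 1 / (β_d ^ 2 * k_min ^ 2)
      + (a_max * c_ι ^ 2 + 4 * a_max ^ 2 * c_ι ^ 2 / β_e ^ 2)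
        * (1 + 1 / (β_d ^ 2 * k_min ^ 2))) * (‖p 0‖ ^ 2 + ‖z 0‖ ^ 2)
      = (1 / (2 * k_min) * ‖z 0‖ ^ 2
          + (k_max / k_min * ‖z 0‖ ^ 2 + 1 / (β_d ^ 2 * k_min ^ 2) * ‖z 0‖ ^ 2
            + (a_max * c_ι ^ 2 + 4 * a_max ^ 2 * c_ι ^ 2 / β_e ^ 2)
              * (‖p 0‖ ^ 2 + 1 / (β_d ^ 2 * k_min ^ 2) * ‖z 0‖ ^ 2)))
        + ((1 / (2 * k_min) + k_max / k_min + 1 / (β_d ^ 2 * k_min ^ 2)) * ‖p 0‖ ^ 2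
          + ((a_max * c_ι ^ 2 + 4 * a_max ^ 2 * c_ι ^ 2 / β_e ^ 2)
              * (1 / (β_d ^ 2 * k_min ^ 2))) * ‖p 0‖ ^ 2
          + (a_max * c_ι ^ 2 + 4 * a_max ^ 2 * c_ι ^ 2 / β_e ^ 2) * ‖z 0‖ ^ 2) := by
    ring
  rw [goal_eq]
  have hx1 : 0 ≤ (1 / (2 * k_min) + k_max / k_min + 1 / (β_d ^ 2 * k_min ^ 2)) * ‖p 0‖ ^ 2 :=
    mul_nonneg (by linarith) hP0
  have hx2 : 0 ≤ ((a_max * c_ι ^ 2 + 4 * a_max ^ 2 * c_ι ^ 2 / β_e ^ 2)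
      * (1 / (β_d ^ 2 * k_min ^ 2))) * ‖p 0‖ ^ 2 :=
    mul_nonneg (mul_nonneg hc4 hc3) hP0
  have hx3 : 0 ≤ (a_max * c_ι ^ 2 + 4 * a_max ^ 2 * c_ι ^ 2 / β_e ^ 2) * ‖z 0‖ ^ 2 :=
    mul_nonneg hc4 hZ0
  linarith [hsumle, hsup]
end

section
/- Geometric convergence of GMRES residuals from field-of-values bounds: Let E be a real inner product space, M : E →L[ℝ] E a continuous linear map, and c, b constants with 0 < c ≤ b such that c ‖x‖² ≤ ⟪M x, x⟫ and ‖M x‖ ≤ b ‖x‖ for all x ∈ E. Fix r₀ ∈ E and for each k ∈ ℕ let 𝒦_k = span_ℝ { M^j r₀ : 0 ≤ j < k } be the k-th Krylov subspace and ρ_k = inf { ‖r₀ − M y‖ : y ∈ 𝒦_k } the k-th minimal residual norm. Then ρ_k ≤ (1 − c²/b²)^{k/2} ‖r₀‖ for every k ∈ ℕ. -/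
open scoped RealInnerProductSpace

/-- Geometric convergence of GMRES residuals from field-of-values bounds:
if `c‖x‖² ≤ ⟪M x, x⟫` and `‖M x‖ ≤ b‖x‖` for all `x` with `0 < c ≤ b`, then the
`k`-th minimal residual over the Krylov subspace `𝒦_k = span {M^j r₀ : j < k}`
satisfies `ρ_k ≤ (1 - c²/b²)^{k/2} ‖r₀‖`. -/
theorem stmt_9 {E : Type*} [NormedAddCommGroup E] [InnerProductSpace ℝ E]
    (M : E →L[ℝ] E) (c b : ℝ) (hc : 0 < c) (hcb : c ≤ b)
    (hlow : ∀ x : E, c * ‖x‖ ^ 2 ≤ ⟪M x, x⟫)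
    (hup : ∀ x : E, ‖M x‖ ≤ b * ‖x‖)
    (r₀ : E) (k : ℕ) :
    sInf { r : ℝ | ∃ y ∈ Submodule.span ℝ { v : E | ∃ j < k, v = (M ^ j) r₀ },
        r = ‖r₀ - M y‖ }
      ≤ Real.sqrt (1 - c ^ 2 / b ^ 2) ^ k * ‖r₀‖ := by
  have hb : (0 : ℝ) < b := lt_of_lt_of_le hc hcb
  set q : ℝ := Real.sqrt (1 - c ^ 2 / b ^ 2) with hq
  have h1 : (0 : ℝ) ≤ 1 - c ^ 2 / b ^ 2 := by
    have : c ^ 2 / b ^ 2 ≤ 1 := by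
      rw [div_le_one (by positivity)]
      exact pow_le_pow_left₀ hc.le hcb 2
    linarith
  set K : ℕ → Submodule ℝ E :=
    fun m => Submodule.span ℝ { v : E | ∃ j < m, v = (M ^ j) r₀ } with hK
  -- one-step contraction
  have key : ∀ r : E, ∃ α : ℝ, ‖r - α • M r‖ ≤ q * ‖r‖ := by
    intro r
    by_cases hr : r = 0
    · exact ⟨0, by simp [hr]⟩
    have hrn : (0 : ℝ) < ‖r‖ := norm_pos_iff.2 hr
    have ht : c * ‖r‖ ^ 2 ≤ ⟪M r, r⟫ := hlow r
    have htpos : (0 : ℝ) < ⟪M r, r⟫ := lt_of_lt_of_le (by positivity) ht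
    have hMr : M r ≠ 0 := by
      intro h
      rw [h] at htpos
      simp at htpos
    have hMr' : ‖M r‖ ≠ 0 := norm_ne_zero_iff.2 hMr
    have hs : (0 : ℝ) < ‖M r‖ ^ 2 := pow_pos (norm_pos_iff.2 hMr) 2
    set t : ℝ := ⟪M r, r⟫ with hts
    set s : ℝ := ‖M r‖ ^ 2 with hss
    refine ⟨t / s, ?_⟩
    have hsq : ‖r - (t / s) • M r‖ ^ 2 = ‖r‖ ^ 2 - t ^ 2 / s := by
      rw [hts, hss, norm_sub_sq_real, real_inner_smul_right, norm_smul,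
        real_inner_comm r (M r), Real.norm_eq_abs, mul_pow, sq_abs, div_pow]
      field_simp
      ring
    have ht2 : c ^ 2 * ‖r‖ ^ 4 ≤ t ^ 2 := by
      have h := pow_le_pow_left₀ (by positivity) ht 2
      calc c ^ 2 * ‖r‖ ^ 4 = (c * ‖r‖ ^ 2) ^ 2 := by ring
        _ ≤ t ^ 2 := h
    have hs2 : s ≤ b ^ 2 * ‖r‖ ^ 2 := by
      calc s = ‖M r‖ ^ 2 := rfl
        _ ≤ (b * ‖r‖) ^ 2 := pow_le_pow_left₀ (norm_nonneg _) (hup r) 2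
        _ = b ^ 2 * ‖r‖ ^ 2 := by ring
    have hdiv : c ^ 2 / b ^ 2 * ‖r‖ ^ 2 ≤ t ^ 2 / s := by
      have h := div_le_div₀ (by positivity : (0:ℝ) ≤ t ^ 2) ht2 hs hs2
      calc c ^ 2 / b ^ 2 * ‖r‖ ^ 2 = c ^ 2 * ‖r‖ ^ 4 / (b ^ 2 * ‖r‖ ^ 2) := by
            field_simp
        _ ≤ t ^ 2 / s := h
    have hfin : ‖r - (t / s) • M r‖ ^ 2 ≤ (1 - c ^ 2 / b ^ 2) * ‖r‖ ^ 2 := by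
      rw [hsq]; nlinarith
    have := Real.sqrt_le_sqrt hfin
    rwa [Real.sqrt_sq (norm_nonneg _), Real.sqrt_mul h1,
      Real.sqrt_sq (norm_nonneg _)] at this
  -- main induction
  have main : ∀ m : ℕ, ∃ y ∈ K m, ‖r₀ - M y‖ ≤ q ^ m * ‖r₀‖ := by
    intro m
    induction m with
    | zero => exact ⟨0, Submodule.zero_mem _, by simp⟩
    | succ n ih =>
      obtain ⟨y, hy, hle⟩ := ih
      obtain ⟨α, hα⟩ := key (r₀ - M y)
      refine ⟨y + α • (r₀ - M y), ?_, ?_⟩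
      · have hmono : K n ≤ K (n + 1) := by
          apply Submodule.span_mono
          rintro v ⟨j, hj, rfl⟩
          exact ⟨j, by omega, rfl⟩
        have hr₀ : r₀ ∈ K (n + 1) :=
          Submodule.subset_span ⟨0, Nat.succ_pos n, by simp⟩
        have hMy : M y ∈ K (n + 1) := by
          have hle' : K n ≤ (K (n + 1)).comap (M : E →ₗ[ℝ] E) := by
            apply Submodule.span_le.2
            rintro v ⟨j, hj, rfl⟩
            refine Submodule.subset_span ⟨j + 1, by omega, ?_⟩
            show M ((M ^ j) r₀) = (M ^ (j + 1)) r₀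
            rw [pow_succ']
            rfl
          exact hle' hy
        exact Submodule.add_mem _ (hmono hy)
          (Submodule.smul_mem _ _ (Submodule.sub_mem _ hr₀ hMy))
      · have heq : r₀ - M (y + α • (r₀ - M y))
            = (r₀ - M y) - α • M (r₀ - M y) := by
          rw [map_add, map_smul]
          abel
        rw [heq, pow_succ']
        calc ‖(r₀ - M y) - α • M (r₀ - M y)‖ ≤ q * ‖r₀ - M y‖ := hα
          _ ≤ q * (q ^ n * ‖r₀‖) :=
            mul_le_mul_of_nonneg_left hle (Real.sqrt_nonneg _)
          _ = q * q ^ n * ‖r₀‖ := by ring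
  obtain ⟨y, hy, hle⟩ := main k
  refine le_trans (csInf_le ?_ ⟨y, hy, rfl⟩) hle
  exact ⟨0, by rintro r ⟨z, hz, rfl⟩; exact norm_nonneg _⟩
end
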